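/- Let m ≥ 1000 and define η_m(ρ) = sin[(π/2)((m/(m-1))ρ - 1/(m-1))] for ρ ∈ [1/m, 1]. Then for all ρ ∈ [1/m, 1], one has 0 ≤ 3η_m(ρ) + ρ·η_m'(ρ) ≤ 13/4. -/

import Mathlib

open MeasureTheory Real Set

lemma sin_ge_cubic' {x : ℝ} (hx : 0 ≤ x) : x - x^3/6 ≤ Real.sin x := by
  have hmono : Monotone (fun x : ℝ => Real.sin x - (x - x^3/6)) := by
    apply monotone_of_deriv_nonneg
    · fun_prop
    · intro y
      have h1 : HasDerivAt (fun x : ℝ => Real.sin x - (x - x^3/6))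
          (Real.cos y - (1 - y^2/2)) y := by
        have := (Real.hasDerivAt_sin y).sub ((hasDerivAt_id y).sub
          (((hasDerivAt_pow 3 y).div_const 6)))
        refine this.congr_deriv ?_
        push_cast
        ring
      rw [h1.deriv]
      have := Real.one_sub_sq_div_two_le_cos (x := y)
      nlinarith
  have := hmono hx
  simpa using this

lemma cos_le_quartic' {x : ℝ} (hx : 0 ≤ x) : Real.cos x ≤ 1 - x^2/2 + x^4/24 := by
  have hmono : MonotoneOn (fun x : ℝ => (1 - x^2/2 + x^4/24) - Real.cos x) (Set.Ici 0) := by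
    apply monotoneOn_of_deriv_nonneg (convex_Ici 0)
    · fun_prop
    · fun_prop
    · intro y hy
      simp only [interior_Ici, Set.mem_Ioi] at hy
      have h1 : HasDerivAt (fun x : ℝ => (1 - x^2/2 + x^4/24) - Real.cos x)
          ((y^3/6 - y) - (-Real.sin y)) y := by
        have := (((hasDerivAt_const y (1:ℝ)).sub ((hasDerivAt_pow 2 y).div_const 2)).add
          ((hasDerivAt_pow 4 y).div_const 24)).sub (Real.hasDerivAt_cos y)
        refine this.congr_deriv ?_
        push_cast
        ring
      rw [h1.deriv]
      have := sin_ge_cubic' hy.le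
      nlinarith
  have := hmono Set.self_mem_Ici (Set.mem_Ici.mpr hx) hx
  simpa using this

lemma sin_le_quintic' {x : ℝ} (hx : 0 ≤ x) : Real.sin x ≤ x - x^3/6 + x^5/120 := by
  have hmono : MonotoneOn (fun x : ℝ => (x - x^3/6 + x^5/120) - Real.sin x) (Set.Ici 0) := by
    apply monotoneOn_of_deriv_nonneg (convex_Ici 0)
    · fun_prop
    · fun_prop
    · intro y hy
      simp only [interior_Ici, Set.mem_Ioi] at hy
      have h1 : HasDerivAt (fun x : ℝ => (x - x^3/6 + x^5/120) - Real.sin x)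
          ((1 - y^2/2 + y^4/24) - Real.cos y) y := by
        have := (((hasDerivAt_id y).sub ((hasDerivAt_pow 3 y).div_const 6)).add
          ((hasDerivAt_pow 5 y).div_const 120)).sub (Real.hasDerivAt_sin y)
        refine this.congr_deriv ?_
        push_cast
        ring
      rw [h1.deriv]
      have := cos_le_quartic' hy.le
      linarith
  have := hmono Set.self_mem_Ici (Set.mem_Ici.mpr hx) hx
  simpa using this

lemma key_poly' {u c : ℝ} (hu : 0 ≤ u) (hu2 : u ≤ 1.5708) (hc2 : c ≤ 1.5724) (huc : u ≤ c) :
    3*(1 - u^2/2 + u^4/24) + (c - u)*(u - u^3/6 + u^5/120) ≤ 13/4 := by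
  have hP : 0 ≤ u - u^3/6 + u^5/120 := by nlinarith [sq_nonneg u, sq_nonneg (u^2 - 3)]
  have h1 : (c - u)*(u - u^3/6 + u^5/120) ≤ (1.5724 - u)*(u - u^3/6 + u^5/120) := by
    apply mul_le_mul_of_nonneg_right _ hP
    linarith
  have h2 : 3*(1 - u^2/2 + u^4/24) + (1.5724 - u)*(u - u^3/6 + u^5/120) ≤ 13/4 := by
    nlinarith [sq_nonneg (u - 0.318), sq_nonneg (u*(u-0.318)), sq_nonneg (u^2*(u-0.318)),
      sq_nonneg (u^2 - 0.318*u), mul_nonneg hu hu, sq_nonneg (u^2-1), sq_nonneg (u-1),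
      mul_nonneg (mul_nonneg hu hu) hu, sq_nonneg (u^3 - 0.318*u^2)]
  linarith

/-- For `m ≥ 1000` and `η_m(ρ) = sin((π/2)((m/(m-1))ρ - 1/(m-1)))`, one has
`0 ≤ 3η_m(ρ) + ρ·η_m'(ρ) ≤ 13/4` for all `ρ ∈ [1/m, 1]`. -/
theorem cutoff_bound_two (m : ℕ) (hm : 1000 ≤ m) (η : ℝ → ℝ)
    (hη : ∀ ρ : ℝ, η ρ = Real.sin (π/2 * ((m / ((m : ℝ) - 1)) * ρ - 1 / ((m : ℝ) - 1)))) :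
    ∀ ρ ∈ Set.Icc (1/(m:ℝ)) 1,
      0 ≤ 3 * η ρ + ρ * deriv η ρ ∧ 3 * η ρ + ρ * deriv η ρ ≤ 13/4 := by
  have hn : (1000 : ℝ) ≤ (m : ℝ) := by exact_mod_cast hm
  have hn1 : (0:ℝ) < (m:ℝ) - 1 := by linarith
  have hn0 : (0:ℝ) < (m:ℝ) := by linarith
  intro ρ hρ
  obtain ⟨hρ1, hρ2⟩ := hρ
  set θ : ℝ := π/2 * ((m / ((m : ℝ) - 1)) * ρ - 1 / ((m : ℝ) - 1)) with hθdef
  have hηf : η = fun x => Real.sin (π/2 * ((m / ((m : ℝ) - 1)) * x - 1 / ((m : ℝ) - 1))) :=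
    funext hη
  have hd : HasDerivAt η (Real.cos θ * (π/2 * ((m:ℝ) / ((m : ℝ) - 1)))) ρ := by
    rw [hηf]
    have hinner : HasDerivAt (fun x : ℝ => π/2 * ((m / ((m : ℝ) - 1)) * x - 1 / ((m : ℝ) - 1)))
        (π/2 * ((m:ℝ) / ((m : ℝ) - 1))) ρ := by
      have := (((hasDerivAt_id ρ).const_mul ((m:ℝ) / ((m : ℝ) - 1))).sub_const
        (1 / ((m : ℝ) - 1))).const_mul (π/2)
      refine this.congr_deriv ?_
      ring
    exact hinner.sin
  rw [hd.deriv, hη ρ]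
  have hpi : (0:ℝ) < π := Real.pi_pos
  -- θ bounds
  have hmρ1 : (1:ℝ) ≤ (m:ℝ) * ρ := by
    rw [div_le_iff₀ hn0] at hρ1; linarith
  have hθ0' : 0 ≤ θ := by
    rw [hθdef]
    have h2 : 0 ≤ (m / ((m : ℝ) - 1)) * ρ - 1 / ((m : ℝ) - 1) := by
      rw [div_mul_eq_mul_div, div_sub_div_same, le_div_iff₀ hn1]
      linarith
    positivity
  have hθπ : θ ≤ π/2 := by
    rw [hθdef]
    have h2 : (m / ((m : ℝ) - 1)) * ρ - 1 / ((m : ℝ) - 1) ≤ 1 := by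
      rw [div_mul_eq_mul_div, div_sub_div_same, div_le_one hn1]
      nlinarith
    nlinarith
  -- rewrite ρ * deriv part
  set δ : ℝ := π/2 / ((m:ℝ) - 1) with hδdef
  have hρd : ρ * (π/2 * ((m:ℝ) / ((m : ℝ) - 1))) = θ + δ := by
    rw [hθdef, hδdef]
    field_simp
    ring
  have hE : 3 * Real.sin θ + ρ * (Real.cos θ * (π/2 * ((m:ℝ) / ((m : ℝ) - 1))))
      = 3 * Real.sin θ + (θ + δ) * Real.cos θ := by
    rw [← hρd]; ring
  rw [show Real.sin (π/2 * ((m / ((m : ℝ) - 1)) * ρ - 1 / ((m : ℝ) - 1))) = Real.sin θ from rfl]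
  rw [show Real.cos (π/2 * ((m / ((m : ℝ) - 1)) * ρ - 1 / ((m : ℝ) - 1))) = Real.cos θ from rfl]
  rw [hE]
  have hδ0 : 0 < δ := by positivity
  have hδle : δ ≤ 0.0016 := by
    rw [hδdef, div_le_iff₀ hn1]
    nlinarith [Real.pi_lt_d2]
  have hsin0 : 0 ≤ Real.sin θ := Real.sin_nonneg_of_nonneg_of_le_pi hθ0' (by linarith)
  have hcos0 : 0 ≤ Real.cos θ := Real.cos_nonneg_of_mem_Icc ⟨by linarith, hθπ⟩
  constructor
  · have := mul_nonneg (by linarith : (0:ℝ) ≤ θ + δ) hcos0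
    linarith
  · -- substitute u = π/2 - θ
    set u : ℝ := π/2 - θ with hudef
    have hu0 : 0 ≤ u := by rw [hudef]; linarith
    have hsθ : Real.sin θ = Real.cos u := by rw [hudef, Real.cos_pi_div_two_sub]
    have hcθ : Real.cos θ = Real.sin u := by rw [hudef, Real.sin_pi_div_two_sub]
    have hθu : θ + δ = (π/2 + δ) - u := by rw [hudef]; ring
    rw [hsθ, hcθ, hθu]
    set c : ℝ := π/2 + δ with hcdef
    have hucle : u ≤ c := by rw [hudef, hcdef]; linarith
    have hcle : c ≤ 1.5724 := by
      rw [hcdef]; nlinarith [Real.pi_lt_d6]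
    have hu2 : u ≤ 1.5708 := by
      rw [hudef]; nlinarith [Real.pi_lt_d6]
    have hsinu0 : 0 ≤ Real.sin u := by rw [← hcθ]; exact hcos0
    have hcosle := cos_le_quartic' hu0
    have hsinle := sin_le_quintic' hu0
    have hmul : (c - u) * Real.sin u ≤ (c - u) * (u - u^3/6 + u^5/120) :=
      mul_le_mul_of_nonneg_left hsinle (by linarith)
    have hkey := key_poly' hu0 hu2 hcle hucle
    clear_value u c
    linarith
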